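/- For the bundled star graph with n leaves, any bundled-box algorithm has expected welfare at most 1, while the asynchronous algorithm that inspects all of u's boxes and completes any edge with v_{u,w_i} = n obtains expected welfare at least n(1 - 1/e) - 1; hence bundled-box algorithms are at best an O(1/n)-approximation. -/

import Mathlib

open MeasureTheory Filter
open scoped Classical

/-- Bounded measurable functions are integrable w.r.t. a probability measure. -/
lemma bdd_integrable {Ω : Type*} [MeasurableSpace Ω] (μ : Measure Ω) [IsProbabilityMeasure μ]
    (f : Ω → ℝ) (hf : Measurable f) (C : ℝ) (hC : ∀ ω, |f ω| ≤ C) : Integrable f μ :=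
  (integrable_const C).mono' hf.aestronglyMeasurable (Filter.Eventually.of_forall hC)

/-- Failure of bundled-box algorithms on the bundled star graph: center `u`, leaves
`w_1,…,w_n`; box `(w_i, u)` has value `1` and cost `1`; box `(u, w_i)` has cost
`1/n` and value `n` with probability `1/n` (else `0`), independently.
(1) Any bundled-box algorithm — modeled by 0/1 inspection indicators `I i`
(inspect both boxes of edge `i` at combined cost `1 + 1/n` for combined value
`v i + 1`, with `I i` independent of `v i`) and claiming indicators `A i ≤ I i`
forming a matching (`∑ A_i ≤ 1`) — has expected welfare at most `1`.
(2) The asynchronous algorithm that inspects all of `u`'s boxes (total cost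
`n · (1/n) = 1`) and completes any edge with `v_{u,w_i} = n` (paying `1`, gaining
`n + 1`) has expected welfare at least `n(1 - 1/e) - 1`. -/
theorem bundled_star_graph
    {Ω : Type*} [MeasurableSpace Ω] (μ : Measure Ω) [IsProbabilityMeasure μ]
    (n : ℕ) (hn : 0 < n) (v : Fin n → Ω → ℝ)
    (hmeas : ∀ i, Measurable (v i))
    (hval : ∀ i ω, v i ω = 0 ∨ v i ω = n)
    (hprob : ∀ i, μ {ω | v i ω = n} = 1 / n)
    (hindep : ProbabilityTheory.iIndepFun v μ) :
    (∀ A I : Fin n → Ω → ℝ,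
      (∀ i, Measurable (A i)) → (∀ i, Measurable (I i)) →
      (∀ i ω, A i ω = 0 ∨ A i ω = 1) → (∀ i ω, I i ω = 0 ∨ I i ω = 1) →
      (∀ i ω, A i ω ≤ I i ω) → (∀ ω, ∑ i, A i ω ≤ 1) →
      (∀ i, ProbabilityTheory.IndepFun (I i) (v i) μ) →
      ∫ ω, (∑ i, (A i ω * (v i ω + 1) - I i ω * (1 + 1 / n))) ∂μ ≤ 1) ∧
    ((n : ℝ) * (1 - Real.exp (-1)) - 1 ≤
      (∫ ω, (if ∃ i, v i ω = (n : ℝ) then (n : ℝ) else 0) ∂μ) - 1) := by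
  have hn' : (n : ℝ) ≠ 0 := Nat.cast_ne_zero.mpr hn.ne'
  have hnpos : (0 : ℝ) < n := Nat.cast_pos.mpr hn
  -- the sets where v i = n
  set S : Fin n → Set Ω := fun i => {ω | v i ω = n} with hS
  have hSmeas : ∀ i, MeasurableSet (S i) := fun i =>
    (hmeas i) (measurableSet_singleton (n : ℝ))
  -- values as indicators
  have hv_ind : ∀ i, v i = Set.indicator (S i) (fun _ => (n : ℝ)) := by
    intro i
    funext ω
    by_cases h : ω ∈ S i
    · rw [Set.indicator_of_mem h]; exact h
    · rw [Set.indicator_of_notMem h]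
      rcases hval i ω with h0 | h0
      · exact h0
      · exact absurd h0 h
  have hvint : ∀ i, Integrable (v i) μ :=
    fun i => bdd_integrable μ (v i) (hmeas i) n (by
      intro ω; rcases hval i ω with h | h <;> rw [h] <;> simp [abs_of_nonneg, hnpos.le])
  have hvmean : ∀ i, ∫ ω, v i ω ∂μ = 1 := by
    intro i
    rw [show (fun ω => v i ω) = v i from rfl, hv_ind i, integral_indicator_const _ (hSmeas i),
      measureReal_def, hprob i]
    rw [smul_eq_mul, ENNReal.toReal_div, ENNReal.toReal_one]
    simp only [ENNReal.toReal_natCast]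
    field_simp
  constructor
  · -- Part 1
    intro A I hAmeas hImeas hA01 hI01 hAI hmatch hInd
    have hAint : ∀ i, Integrable (A i) μ := fun i => bdd_integrable μ (A i) (hAmeas i) 1 (by
      intro ω; rcases hA01 i ω with h | h <;> rw [h] <;> norm_num)
    have hIint : ∀ i, Integrable (I i) μ := fun i => bdd_integrable μ (I i) (hImeas i) 1 (by
      intro ω; rcases hI01 i ω with h | h <;> rw [h] <;> norm_num)
    have hterm_int : ∀ i, Integrable (fun ω => A i ω * (v i ω + 1) - I i ω * (1 + 1 / n)) μ := by
      intro i
      have hbd : ∀ ω, |A i ω * (v i ω + 1)| ≤ (n : ℝ) + 1 := by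
        intro ω
        rw [abs_mul]
        have h1 : |A i ω| ≤ 1 := by rcases hA01 i ω with h | h <;> rw [h] <;> norm_num
        have h2 : |v i ω + 1| ≤ (n : ℝ) + 1 := by
          rcases hval i ω with h | h <;> rw [h, abs_of_nonneg] <;> nlinarith
        calc |A i ω| * |v i ω + 1| ≤ 1 * ((n : ℝ) + 1) :=
              mul_le_mul h1 h2 (abs_nonneg _) zero_le_one
          _ = (n : ℝ) + 1 := one_mul _
      exact Integrable.sub
        (bdd_integrable μ _ ((hAmeas i).mul ((hmeas i).add measurable_const)) ((n : ℝ) + 1) hbd)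
        ((hIint i).mul_const _)
    have hIv_int : ∀ i, Integrable (fun ω => I i ω * v i ω) μ := by
      intro i
      have hbd : ∀ ω, |I i ω * v i ω| ≤ (n : ℝ) := by
        intro ω
        rw [abs_mul]
        have h1 : |I i ω| ≤ 1 := by rcases hI01 i ω with h | h <;> rw [h] <;> norm_num
        have h2 : |v i ω| ≤ (n : ℝ) := by
          rcases hval i ω with h | h <;> rw [h, abs_of_nonneg] <;> nlinarith
        calc |I i ω| * |v i ω| ≤ 1 * (n : ℝ) := mul_le_mul h1 h2 (abs_nonneg _) zero_le_one
          _ = (n : ℝ) := one_mul _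
      exact bdd_integrable μ _ ((hImeas i).mul (hmeas i)) n hbd
    -- key per-index bound
    have hkey : ∀ i, ∫ ω, (A i ω * (v i ω + 1) - I i ω * (1 + 1 / n)) ∂μ ≤ ∫ ω, A i ω ∂μ := by
      intro i
      have hg1 : Integrable (fun ω => I i ω * v i ω + A i ω) μ := by
        exact (hIv_int i).add (hAint i)
      have hg2 : Integrable (fun ω => I i ω * v i ω + A i ω - I i ω) μ := by
        exact hg1.sub (hIint i)
      have hg3 : Integrable (fun ω => I i ω * (1 / (n : ℝ))) μ := by
        exact (hIint i).mul_const _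
      have hg : Integrable (fun ω => I i ω * v i ω + A i ω - I i ω - I i ω * (1 / (n : ℝ))) μ := by
        exact hg2.sub hg3
      have hstep : ∫ ω, (A i ω * (v i ω + 1) - I i ω * (1 + 1 / n)) ∂μ ≤
          ∫ ω, (I i ω * v i ω + A i ω - I i ω - I i ω * (1 / n)) ∂μ := by
        apply integral_mono (hterm_int i) hg
        intro ω
        have h1 : A i ω * v i ω ≤ I i ω * v i ω := by
          apply mul_le_mul_of_nonneg_right (hAI i ω)
          rcases hval i ω with h | h <;> rw [h] <;> positivity
        simp only [Pi.add_apply, Pi.sub_apply]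
        nlinarith [hAI i ω]
      have hIv : ∫ ω, I i ω * v i ω ∂μ = (∫ ω, I i ω ∂μ) := by
        have := (hInd i).integral_mul_eq_mul_integral (hImeas i).aestronglyMeasurable
          (hmeas i).aestronglyMeasurable
        rw [show (fun ω => I i ω * v i ω) = I i * v i from rfl, this, hvmean i, mul_one]
      have hInn : 0 ≤ ∫ ω, I i ω ∂μ := by
        apply integral_nonneg
        intro ω; rcases hI01 i ω with h | h <;> rw [h] <;> norm_num
      calc ∫ ω, (A i ω * (v i ω + 1) - I i ω * (1 + 1 / n)) ∂μ
          ≤ ∫ ω, (I i ω * v i ω + A i ω - I i ω - I i ω * (1 / n)) ∂μ := hstep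
        _ = (∫ ω, I i ω * v i ω ∂μ) + (∫ ω, A i ω ∂μ) - (∫ ω, I i ω ∂μ)
            - (∫ ω, I i ω ∂μ) * (1 / n) := by
            rw [integral_sub hg2 hg3, integral_sub hg1 (hIint i),
              integral_add (hIv_int i) (hAint i), integral_mul_const]
        _ = (∫ ω, A i ω ∂μ) - (∫ ω, I i ω ∂μ) * (1 / n) := by rw [hIv]; ring
        _ ≤ ∫ ω, A i ω ∂μ := by
            have : 0 ≤ (∫ ω, I i ω ∂μ) * (1 / n) := by positivity
            linarith
    calc ∫ ω, (∑ i, (A i ω * (v i ω + 1) - I i ω * (1 + 1 / n))) ∂μ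
        = ∑ i, ∫ ω, (A i ω * (v i ω + 1) - I i ω * (1 + 1 / n)) ∂μ :=
          integral_finset_sum _ (fun i _ => hterm_int i)
      _ ≤ ∑ i, ∫ ω, A i ω ∂μ := Finset.sum_le_sum (fun i _ => hkey i)
      _ = ∫ ω, (∑ i, A i ω) ∂μ := (integral_finset_sum _ (fun i _ => hAint i)).symm
      _ ≤ ∫ _ω, (1 : ℝ) ∂μ := integral_mono
          (integrable_finset_sum _ (fun i _ => hAint i)) (integrable_const 1) hmatch
      _ = 1 := by simp
  · -- Part 2
    -- the union set
    have hcompl : μ (⋂ i, (S i)ᶜ) = (1 - 1 / n : ENNReal) ^ n := by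
      have : μ (⋂ i, (S i)ᶜ) = ∏ i, μ ((S i)ᶜ) := by
        apply hindep.meas_iInter
        intro i
        exact ⟨{(n : ℝ)}ᶜ, (measurableSet_singleton _).compl, rfl⟩
      rw [this]
      have hone : ∀ i : Fin n, μ ((S i)ᶜ) = 1 - 1 / n := by
        intro i
        rw [measure_compl (hSmeas i) (measure_ne_top μ _), hprob i, measure_univ]
      rw [Finset.prod_congr rfl (fun i _ => hone i), Finset.prod_const, Finset.card_univ,
        Fintype.card_fin]
    have hunion : μ {ω | ∃ i, v i ω = (n : ℝ)} = 1 - (1 - 1 / n : ENNReal) ^ n := by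
      have hset : {ω | ∃ i, v i ω = (n : ℝ)} = (⋂ i, (S i)ᶜ)ᶜ := by
        ext ω; simp [S]
      rw [hset, measure_compl (MeasurableSet.iInter (fun i => (hSmeas i).compl))
        (measure_ne_top μ _), measure_univ, hcompl]
    have hint : ∫ ω, (if ∃ i, v i ω = (n : ℝ) then (n : ℝ) else 0) ∂μ =
        (μ {ω | ∃ i, v i ω = (n : ℝ)}).toReal * n := by
      have : (fun ω => if ∃ i, v i ω = (n : ℝ) then (n : ℝ) else 0) =
          Set.indicator {ω | ∃ i, v i ω = (n : ℝ)} (fun _ => (n : ℝ)) := by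
        funext ω; rw [Set.indicator_apply]; rfl
      have hSU : MeasurableSet {ω | ∃ i, v i ω = (n : ℝ)} := by
        rw [show {ω | ∃ i, v i ω = (n : ℝ)} = ⋃ i, S i by ext ω; simp [S]]
        exact MeasurableSet.iUnion (fun i => hSmeas i)
      rw [this, integral_indicator_const _ hSU, smul_eq_mul, measureReal_def]
    -- toReal computation
    have h1n : (1 / n : ENNReal) ≤ 1 := by
      rw [ENNReal.div_le_iff (by exact_mod_cast hn.ne') (by simp), one_mul]
      exact_mod_cast hn
    have htoReal : (1 - (1 - 1 / n : ENNReal) ^ n).toReal = 1 - (1 - 1 / (n : ℝ)) ^ n := by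
      have hb : (1 - 1 / n : ENNReal) ≤ 1 := tsub_le_self
      have hbn : (1 - 1 / n : ENNReal) ^ n ≤ 1 := pow_le_one' hb n
      rw [ENNReal.toReal_sub_of_le hbn (by simp), ENNReal.toReal_one, ENNReal.toReal_pow,
        ENNReal.toReal_sub_of_le h1n (by simp), ENNReal.toReal_one, ENNReal.toReal_div,
        ENNReal.toReal_one, ENNReal.toReal_natCast]
    -- analytic bound
    have hana : (1 - 1 / (n : ℝ)) ^ n ≤ Real.exp (-1) := by
      have h1 : 1 - 1 / (n : ℝ) ≤ Real.exp (-(1 / n)) := by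
        have := Real.add_one_le_exp (-(1 / (n : ℝ)))
        linarith
      have h0 : (0 : ℝ) ≤ 1 - 1 / n := by
        rw [sub_nonneg, div_le_one hnpos]
        exact_mod_cast hn
      calc (1 - 1 / (n : ℝ)) ^ n ≤ (Real.exp (-(1 / n))) ^ n := pow_le_pow_left₀ h0 h1 n
        _ = Real.exp ((n : ℝ) * (-(1 / n))) := (Real.exp_nat_mul _ n).symm
        _ = Real.exp (-1) := by
            congr 1; field_simp
    rw [hint, hunion, htoReal]
    have : (n : ℝ) * (1 - Real.exp (-1)) ≤ (1 - (1 - 1 / (n : ℝ)) ^ n) * n := by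
      rw [mul_comm]
      apply mul_le_mul_of_nonneg_right _ hnpos.le
      linarith
    linarith
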